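/- For all real d×d matrices M and N and any real p with 2 ≤ p < ∞, the inequality (1/2^{p-1})|M−N|^p ≤ (|M|^{p-2}M − |N|^{p-2}N) : (M−N) holds, where : denotes the Frobenius inner product and |·| the Frobenius norm (with the convention that |X|^{p-2}X = 0 when X = 0). -/

import Mathlib

/-- Frobenius inner product of real `d × d` matrices. -/
def frobInner {d : ℕ} (A B : Matrix (Fin d) (Fin d) ℝ) : ℝ :=
  ∑ i, ∑ j, A i j * B i j

/-- Frobenius norm of a real `d × d` matrix. -/
noncomputable def frobNorm {d : ℕ} (A : Matrix (Fin d) (Fin d) ℝ) : ℝ :=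
  Real.sqrt (frobInner A A)

/-- The power-law map `A ↦ |A|^{p-2} A`, extended by `0` at `A = 0`. -/
noncomputable def powerLaw {d : ℕ} (p : ℝ) (A : Matrix (Fin d) (Fin d) ℝ) :
    Matrix (Fin d) (Fin d) ℝ :=
  if A = 0 then 0 else (frobNorm A) ^ (p - 2) • A

lemma powerLaw_eq {d : ℕ} (p : ℝ) (A : Matrix (Fin d) (Fin d) ℝ) :
    powerLaw p A = (frobNorm A) ^ (p - 2) • A := by
  unfold powerLaw
  split_ifs with h
  · simp [h]
  · rfl

lemma frobInner_self_nonneg {d : ℕ} (A : Matrix (Fin d) (Fin d) ℝ) :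
    0 ≤ frobInner A A := by
  apply Finset.sum_nonneg
  intro i _
  apply Finset.sum_nonneg
  intro j _
  exact mul_self_nonneg _

lemma frobNorm_nonneg {d : ℕ} (A : Matrix (Fin d) (Fin d) ℝ) : 0 ≤ frobNorm A :=
  Real.sqrt_nonneg _

lemma frobNorm_mul_self {d : ℕ} (A : Matrix (Fin d) (Fin d) ℝ) :
    frobNorm A * frobNorm A = frobInner A A :=
  Real.mul_self_sqrt (frobInner_self_nonneg A)

lemma frobInner_expand {d : ℕ} (x y : ℝ) (M N : Matrix (Fin d) (Fin d) ℝ) :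
    frobInner (x • M - y • N) (M - N)
      = x * frobInner M M - (x + y) * frobInner M N + y * frobInner N N := by
  simp only [frobInner, Matrix.sub_apply, Matrix.smul_apply, smul_eq_mul,
    Finset.mul_sum, ← Finset.sum_sub_distrib, ← Finset.sum_add_distrib]
  refine Finset.sum_congr rfl fun i _ => ?_
  refine Finset.sum_congr rfl fun j _ => ?_
  ring

/-- Cauchy–Schwarz lower bound. -/
lemma neg_frobNorm_mul_le {d : ℕ} (M N : Matrix (Fin d) (Fin d) ℝ) :
    -(frobNorm M * frobNorm N) ≤ frobInner M N := by
  have key : ∀ (A B : Matrix (Fin d) (Fin d) ℝ),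
      frobInner A B ≤ frobNorm A * frobNorm B := by
    intro A B
    have h := Real.sum_mul_le_sqrt_mul_sqrt (Finset.univ : Finset (Fin d × Fin d))
      (fun x => A x.1 x.2) (fun x => B x.1 x.2)
    have hflat : ∀ (C D : Matrix (Fin d) (Fin d) ℝ),
        frobInner C D = ∑ x : Fin d × Fin d, C x.1 x.2 * D x.1 x.2 := by
      intro C D
      rw [frobInner]
      exact (Fintype.sum_prod_type (fun x : Fin d × Fin d => C x.1 x.2 * D x.1 x.2)).symm
    rw [hflat, frobNorm, frobNorm, hflat, hflat]
    simpa [sq] using h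
  have h := key (-M) N
  have h1 : frobInner (-M) N = -frobInner M N := by
    simp [frobInner]
  have h2 : frobNorm (-M) = frobNorm M := by
    unfold frobNorm
    congr 1
    simp [frobInner]
  rw [h1, h2] at h
  linarith

/-- The key scalar inequality. -/
lemma key_scalar (p : ℝ) (hp : 2 ≤ p) (a b s c : ℝ) (ha : 0 ≤ a) (hb : 0 ≤ b)
    (hc : 0 ≤ c) (hs : -(a * b) ≤ s) (hcsq : c * c = a * a + b * b - 2 * s) :
    (1 / 2 ^ (p - 1)) * c ^ p
      ≤ a ^ (p - 2) * (a * a) - (a ^ (p - 2) + b ^ (p - 2)) * s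
          + b ^ (p - 2) * (b * b) := by
  have hq : 0 ≤ p - 2 := by linarith
  have hsplit : a ^ (p - 2) * (a * a) - (a ^ (p - 2) + b ^ (p - 2)) * s
      + b ^ (p - 2) * (b * b)
      = (1 / 2) * (a ^ (p - 2) + b ^ (p - 2)) * (c * c)
        + (1 / 2) * (a ^ (p - 2) - b ^ (p - 2)) * (a * a - b * b) := by
    rw [hcsq]; ring
  have hmono : 0 ≤ (a ^ (p - 2) - b ^ (p - 2)) * (a * a - b * b) := by
    rcases le_total a b with h | h
    · have h1 := Real.rpow_le_rpow ha h hq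
      have h2 := mul_nonneg (sub_nonneg.2 h1) (sub_nonneg.2 (mul_self_le_mul_self ha h))
      nlinarith [h2]
    · have h1 := Real.rpow_le_rpow hb h hq
      have h2 := mul_nonneg (sub_nonneg.2 h1) (sub_nonneg.2 (mul_self_le_mul_self hb h))
      nlinarith [h2]
  have hcab : c ≤ a + b := by nlinarith
  have hmax : (c / 2) ^ (p - 2) ≤ a ^ (p - 2) + b ^ (p - 2) := by
    have h1 : c / 2 ≤ max a b := by
      rcases le_total a b with h | h
      · rw [max_eq_right h]; linarith
      · rw [max_eq_left h]; linarith
    calc (c / 2) ^ (p - 2) ≤ (max a b) ^ (p - 2) :=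
          Real.rpow_le_rpow (by positivity) h1 hq
      _ ≤ a ^ (p - 2) + b ^ (p - 2) := by
          rcases le_total a b with h | h
          · rw [max_eq_right h]
            have : 0 ≤ a ^ (p - 2) := Real.rpow_nonneg ha _
            linarith
          · rw [max_eq_left h]
            have : 0 ≤ b ^ (p - 2) := Real.rpow_nonneg hb _
            linarith
  have h2pos : (0:ℝ) < 2 ^ (p - 2) := Real.rpow_pos_of_pos two_pos _
  have h2pow : (2:ℝ) ^ (p - 1) = 2 * 2 ^ (p - 2) := by
    rw [show p - 1 = (p - 2) + 1 by ring, Real.rpow_add two_pos, Real.rpow_one]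
    ring
  have hcc : (c / 2) ^ (p - 2) * (c * c) = c ^ p / 2 ^ (p - 2) := by
    rcases eq_or_lt_of_le hc with h0 | h0
    · rw [← h0]
      rw [Real.zero_rpow (show p ≠ 0 by intro h; rw [h] at hp; norm_num at hp)]
      simp
    · rw [Real.div_rpow hc (by norm_num)]
      have : c * c = c ^ (2:ℝ) := by
        rw [show (2:ℝ) = ((2:ℕ):ℝ) by norm_num, Real.rpow_natCast]
        ring
      rw [this, div_mul_eq_mul_div, ← Real.rpow_add h0]
      norm_num
  have hfinal : (1 / 2 ^ (p - 1)) * c ^ p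
      ≤ (1 / 2) * (a ^ (p - 2) + b ^ (p - 2)) * (c * c) := by
    have h3 := mul_le_mul_of_nonneg_right hmax (mul_self_nonneg c)
    have h4 : (c / 2) ^ (p - 2) * (c * c) = 2 * ((1 / 2 ^ (p - 1)) * c ^ p) := by
      rw [hcc, h2pow]
      field_simp
    nlinarith
  linarith [hsplit, hmono, hfinal]

theorem powerLaw_strong_monotone_p_ge_two {d : ℕ} (p : ℝ) (hp : 2 ≤ p)
    (M N : Matrix (Fin d) (Fin d) ℝ) :
    (1 / 2 ^ (p - 1)) * frobNorm (M - N) ^ p ≤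
      frobInner (powerLaw p M - powerLaw p N) (M - N) := by
  rw [powerLaw_eq, powerLaw_eq, frobInner_expand]
  have ha := frobNorm_nonneg M
  have hb := frobNorm_nonneg N
  have hc := frobNorm_nonneg (M - N)
  have hs := neg_frobNorm_mul_le M N
  have hcsq : frobNorm (M - N) * frobNorm (M - N)
      = frobNorm M * frobNorm M + frobNorm N * frobNorm N - 2 * frobInner M N := by
    rw [frobNorm_mul_self, frobNorm_mul_self, frobNorm_mul_self]
    have h := frobInner_expand (d := d) 1 1 M N
    simp only [one_smul, one_mul] at h
    rw [h]; ring
  have key := key_scalar p hp (frobNorm M) (frobNorm N) (frobInner M N)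
    (frobNorm (M - N)) ha hb hc hs hcsq
  rw [frobNorm_mul_self, frobNorm_mul_self] at key
  linarith
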